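/- For each d ≥ 2, K ≥ 1 and k > 0 there exist constants c₁ = c₁(d,K,k) > 0 and C₁ = C₁(d,K,k) such that the following holds. Let P : ℝ² → ℝ be a polynomial of degree at most d with no terms of degree ≤ 1 (no constant term and no linear terms), with all coefficients bounded in absolute value by K, and with at least one coefficient of absolute value ≥ k. Then there exists a point (x₀,y₀) in the closed unit ball B(0,1) ⊆ ℝ² such that the Hessian matrix D²P(x₀,y₀) has a real eigenvalue λ with c₁ ≤ |λ| ≤ C₁. -/

import Mathlib

open MeasureTheory Real Set
open scoped ENNReal

noncomputable section

/-- Rotation of the plane by angle `θ` about the origin. -/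
def planeRot (θ : ℝ) (p : ℝ × ℝ) : ℝ × ℝ :=
  (Real.cos θ * p.1 - Real.sin θ * p.2, Real.sin θ * p.1 + Real.cos θ * p.2)

/-- The `C`-dilation of the interval `[a,b]` about its centre. -/
def dilInterval (C a b : ℝ) : Set ℝ :=
  Set.Icc ((a + b) / 2 - C * (b - a) / 2) ((a + b) / 2 + C * (b - a) / 2)

/-- The `C`-dilation about its centre of the rectangle obtained by rotating the
axis-parallel closed rectangle `[a₁,b₁] × [a₂,b₂]` by the angle `θ`. -/
def rectD (C θ a₁ b₁ a₂ b₂ : ℝ) : Set (ℝ × ℝ) :=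
  planeRot θ '' (dilInterval C a₁ b₁ ×ˢ dilInterval C a₂ b₂)

/-- A rectangle in the plane: the image of an axis-parallel closed rectangle under a rotation. -/
def IsRectangle (T : Set (ℝ × ℝ)) : Prop :=
  ∃ θ a₁ b₁ a₂ b₂ : ℝ, T = rectD 1 θ a₁ b₁ a₂ b₂

/-- The unit square `[-1,1]²`. -/
def unitSq : Set (ℝ × ℝ) := Set.Icc (-1 : ℝ) 1 ×ˢ Set.Icc (-1 : ℝ) 1

/-- Fourier transform on `ℝ²`. -/
def FT2 (f : ℝ × ℝ → ℂ) (ξ : ℝ × ℝ) : ℂ :=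
  ∫ x : ℝ × ℝ,
    Complex.exp ((((-2) * Real.pi * (x.1 * ξ.1 + x.2 * ξ.2) : ℝ) : ℂ) * Complex.I) * f x

/-- Inverse Fourier transform on `ℝ²`. -/
def FTInv2 (f : ℝ × ℝ → ℂ) (x : ℝ × ℝ) : ℂ :=
  ∫ ξ : ℝ × ℝ,
    Complex.exp (((2 * Real.pi * (x.1 * ξ.1 + x.2 * ξ.2) : ℝ) : ℂ) * Complex.I) * f ξ

/-- Fourier restriction `R_S f` of `f : ℝ² → ℂ` to a set `S ⊆ ℝ²`. -/
def fres2 (f : ℝ × ℝ → ℂ) (S : Set (ℝ × ℝ)) : ℝ × ℝ → ℂ :=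
  FTInv2 (S.indicator (FT2 f))

/-- Fourier transform on `ℝ³`. -/
def FT3 (f : ℝ × ℝ × ℝ → ℂ) (ξ : ℝ × ℝ × ℝ) : ℂ :=
  ∫ x : ℝ × ℝ × ℝ,
    Complex.exp ((((-2) * Real.pi * (x.1 * ξ.1 + x.2.1 * ξ.2.1 + x.2.2 * ξ.2.2) : ℝ) : ℂ)
      * Complex.I) * f x

/-- Inverse Fourier transform on `ℝ³`. -/
def FTInv3 (f : ℝ × ℝ × ℝ → ℂ) (x : ℝ × ℝ × ℝ) : ℂ :=
  ∫ ξ : ℝ × ℝ × ℝ,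
    Complex.exp (((2 * Real.pi * (x.1 * ξ.1 + x.2.1 * ξ.2.1 + x.2.2 * ξ.2.2) : ℝ) : ℂ)
      * Complex.I) * f ξ

/-- The vertical strip `S × ℝ ⊆ ℝ³` over a planar set `S`. -/
def vstrip (S : Set (ℝ × ℝ)) : Set (ℝ × ℝ × ℝ) := {p | (p.1, p.2.1) ∈ S}

/-- Fourier restriction `R_B f` of `f : ℝ³ → ℂ` to a set `B ⊆ ℝ³`. -/
def fres3 (f : ℝ × ℝ × ℝ → ℂ) (B : Set (ℝ × ℝ × ℝ)) : ℝ × ℝ × ℝ → ℂ :=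
  FTInv3 (B.indicator (FT3 f))

/-- `f_S` : Fourier restriction of `f : ℝ³ → ℂ` to the strip `S × ℝ`, `S ⊆ ℝ²`. -/
def fstrip (f : ℝ × ℝ × ℝ → ℂ) (S : Set (ℝ × ℝ)) : ℝ × ℝ × ℝ → ℂ :=
  fres3 f (vstrip S)

/-- The vertical `δ`-neighbourhood of the graph of `φ` above `A ⊆ ℝ²`. -/
def Ngraph (φ : ℝ × ℝ → ℝ) (δ : ℝ) (A : Set (ℝ × ℝ)) : Set (ℝ × ℝ × ℝ) :=
  {p | (p.1, p.2.1) ∈ A ∧ |p.2.2 - φ (p.1, p.2.1)| < δ}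

/-- `φ` is `δ`-flat over `S ⊆ ℝ²`. -/
def DeltaFlat (φ : ℝ × ℝ → ℝ) (δ : ℝ) (S : Set (ℝ × ℝ)) : Prop :=
  ∀ u ∈ S, ∀ v ∈ S, |φ v - φ u - fderiv ℝ φ u (v - u)| ≤ δ

/-- Evaluation of a bivariate polynomial at a point of the plane. -/
def pev (P : MvPolynomial (Fin 2) ℝ) (p : ℝ × ℝ) : ℝ :=
  MvPolynomial.eval ![p.1, p.2] P

/-- Partial derivative in the first variable. -/
def Pdx (P : MvPolynomial (Fin 2) ℝ) : MvPolynomial (Fin 2) ℝ :=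
  MvPolynomial.pderiv (0 : Fin 2) P

/-- Partial derivative in the second variable. -/
def Pdy (P : MvPolynomial (Fin 2) ℝ) : MvPolynomial (Fin 2) ℝ :=
  MvPolynomial.pderiv (1 : Fin 2) P

/-- The Hessian determinant `P_xx P_yy - P_xy²` of a bivariate polynomial. -/
def hessDet (P : MvPolynomial (Fin 2) ℝ) : MvPolynomial (Fin 2) ℝ :=
  Pdx (Pdx P) * Pdy (Pdy P) - Pdy (Pdx P) ^ 2

/-- All coefficients of `P` are bounded in absolute value by `K`. -/
def CoeffBdd (P : MvPolynomial (Fin 2) ℝ) (K : ℝ) : Prop :=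
  ∀ μ : Fin 2 →₀ ℕ, |MvPolynomial.coeff μ P| ≤ K

/-- A bivariate polynomial `φ` is `δ`-flat over `S ⊆ ℝ²`. -/
def PolyFlat (P : MvPolynomial (Fin 2) ℝ) (δ : ℝ) (S : Set (ℝ × ℝ)) : Prop :=
  ∀ u ∈ S, ∀ v ∈ S,
    |pev P v - pev P u - pev (Pdx P) u * (v.1 - u.1) - pev (Pdy P) u * (v.2 - u.2)| ≤ δ

/-- A differentiable function `g : ℝ → ℝ` is `δ`-flat over an interval `I`. -/
def Flat1 (g : ℝ → ℝ) (δ : ℝ) (I : Set ℝ) : Prop :=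
  ∀ x ∈ I, ∀ x₀ ∈ I, |g x - g x₀ - deriv g x₀ * (x - x₀)| ≤ δ


open MvPolynomial

lemma eig2 (a b c : ℝ) : ∃ (lam : ℝ) (v : Fin 2 → ℝ), v ≠ 0 ∧
    Matrix.mulVec !![a,b;b,c] v = lam • v ∧
    |a| ≤ |lam| ∧ |b| ≤ |lam| ∧ |c| ≤ |lam| ∧ |lam| ≤ |a| + |b| + |c| := by
  set t : ℝ := (a+c)/2 with ht
  set s : ℝ := Real.sqrt (((a-c)/2)^2 + b^2) with hs
  have hs0 : 0 ≤ s := Real.sqrt_nonneg _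
  have hs2 : s^2 = ((a-c)/2)^2 + b^2 := Real.sq_sqrt (by positivity)
  have hsb : |b| ≤ s := by
    rw [hs, Real.le_sqrt (abs_nonneg _) (by positivity), sq_abs]; nlinarith [sq_nonneg ((a-c)/2)]
  have hsac : |(a-c)/2| ≤ s := by
    rw [hs, Real.le_sqrt (abs_nonneg _) (by positivity), sq_abs]; nlinarith [sq_nonneg b]
  have hsle : s ≤ |(a-c)/2| + |b| := by
    rw [hs]
    have : ((a-c)/2)^2 + b^2 ≤ (|(a-c)/2| + |b|)^2 := by
      nlinarith [abs_nonneg ((a-c)/2), abs_nonneg b, sq_abs ((a-c)/2), sq_abs b,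
        mul_nonneg (abs_nonneg ((a-c)/2)) (abs_nonneg b)]
    calc Real.sqrt (((a-c)/2)^2 + b^2) ≤ Real.sqrt ((|(a-c)/2| + |b|)^2) := Real.sqrt_le_sqrt this
      _ = |(a-c)/2| + |b| := Real.sqrt_sq (by positivity)
  set lam : ℝ := if 0 ≤ t then t + s else t - s with hlam
  have hkey : (lam - t)^2 = s^2 ∧ |lam| = |t| + s := by
    rw [hlam]; split_ifs with h
    · constructor
      · ring_nf
      · rw [abs_of_nonneg (by linarith), abs_of_nonneg h]
    · constructor
      · ring_nf
      · rw [abs_of_nonpos (by linarith), abs_of_neg (not_le.mp h)]; ring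
  have heig : (a - lam) * (c - lam) = b^2 := by linear_combination hkey.1 + hs2 + (2*lam - t - (a+c)/2) * ht
  have habs : |lam| = |t| + s := hkey.2
  have hta : |a| ≤ |t| + s ∧ |c| ≤ |t| + s := by
    constructor
    · calc |a| = |t + (a-c)/2| := by rw [ht]; ring_nf
        _ ≤ |t| + |(a-c)/2| := abs_add_le _ _
        _ ≤ |t| + s := by linarith
    · calc |c| = |t - (a-c)/2| := by rw [ht]; ring_nf
        _ ≤ |t| + |(a-c)/2| := abs_sub _ _
        _ ≤ |t| + s := by linarith
  have hup : |lam| ≤ |a| + |b| + |c| := by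
    rw [habs]
    have h1 : |t| ≤ (|a| + |c|)/2 := by
      rw [ht]; calc |(a+c)/2| = |a+c|/2 := by rw [abs_div]; simp
        _ ≤ (|a|+|c|)/2 := by have := abs_add_le a c; linarith
    have h2 : |(a-c)/2| ≤ (|a|+|c|)/2 := by
      calc |(a-c)/2| = |a-c|/2 := by rw [abs_div]; simp
        _ ≤ (|a|+|c|)/2 := by have := abs_sub a c; linarith
    linarith
  refine ⟨lam, ?_⟩
  by_cases hv : b = 0 ∧ lam = a
  · refine ⟨![1, 0], ?_, ?_, ?_, ?_, ?_, hup⟩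
    · intro h; have := congr_fun h 0; simp at this
    · funext i; fin_cases i <;>
        simp [Matrix.mulVec, dotProduct, hv.1, hv.2]
    · rw [habs]; exact hta.1
    · rw [habs]; calc |b| ≤ s := hsb
        _ ≤ |t| + s := by linarith [abs_nonneg t]
    · rw [habs]; exact hta.2
  · refine ⟨![b, lam - a], ?_, ?_, ?_, ?_, ?_, hup⟩
    · intro h
      exact hv ⟨by simpa using congr_fun h 0, by have := congr_fun h 1; simp at this; linarith⟩
    · funext i; fin_cases i <;>
        simp [Matrix.mulVec, dotProduct] <;> ring_nf <;> nlinarith [heig]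
    · rw [habs]; exact hta.1
    · rw [habs]; calc |b| ≤ s := hsb
        _ ≤ |t| + s := by linarith [abs_nonneg t]
    · rw [habs]; exact hta.2

noncomputable def idxmu {n : ℕ} (p : Fin n × Fin n) : Fin 2 →₀ ℕ :=
  Finsupp.single 0 (p.1 : ℕ) + Finsupp.single 1 (p.2 : ℕ)

lemma idxmu_apply0 {n : ℕ} (p : Fin n × Fin n) : idxmu p 0 = (p.1 : ℕ) := by
  simp [idxmu, Finsupp.single_apply]

lemma idxmu_apply1 {n : ℕ} (p : Fin n × Fin n) : idxmu p 1 = (p.2 : ℕ) := by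
  simp [idxmu, Finsupp.single_apply]

lemma rebuild (ν : Fin 2 →₀ ℕ) : Finsupp.single 0 (ν 0) + Finsupp.single 1 (ν 1) = ν := by
  ext a; fin_cases a <;> simp [Finsupp.single_apply]

lemma finsupp_sum_eq (ν : Fin 2 →₀ ℕ) : (ν.sum fun _ e => e) = ν 0 + ν 1 := by
  rw [Finsupp.sum_fintype]
  · exact Fin.sum_univ_two _
  · intro i; rfl

noncomputable def toPoly (n : ℕ) (c : Fin n × Fin n → ℝ) : MvPolynomial (Fin 2) ℝ :=
  ∑ p : Fin n × Fin n, monomial (idxmu p) (c p)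

lemma coeff_toPoly (n : ℕ) (c : Fin n × Fin n → ℝ) (p : Fin n × Fin n) :
    coeff (idxmu p) (toPoly n c) = c p := by
  rw [toPoly, coeff_sum]
  rw [Finset.sum_eq_single p]
  · simp [coeff_monomial]
  · intro q _ hq
    rw [coeff_monomial, if_neg]
    intro h
    apply hq
    have h0 := DFunLike.congr_fun h (0 : Fin 2)
    have h1 := DFunLike.congr_fun h (1 : Fin 2)
    simp only [idxmu_apply0, idxmu_apply1] at h0 h1
    ext
    · exact Fin.val_injective h0 ▸ rfl
    · exact Fin.val_injective h1 ▸ rfl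
  · simp

lemma toPoly_eq (n : ℕ) (P : MvPolynomial (Fin 2) ℝ)
    (h : ∀ ν : Fin 2 →₀ ℕ, (n ≤ ν 0 ∨ n ≤ ν 1) → coeff ν P = 0) :
    toPoly n (fun p => coeff (idxmu p) P) = P := by
  ext ν
  by_cases hb : ν 0 < n ∧ ν 1 < n
  · have hv : ν = idxmu ((⟨ν 0, hb.1⟩ : Fin n), (⟨ν 1, hb.2⟩ : Fin n)) := by
      ext a; fin_cases a <;> simp [idxmu_apply0, idxmu_apply1]
    have hc := coeff_toPoly n (fun p => coeff (idxmu p) P)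
      ((⟨ν 0, hb.1⟩ : Fin n), (⟨ν 1, hb.2⟩ : Fin n))
    rw [← hv] at hc
    simpa using hc
  · rw [toPoly, coeff_sum]
    rw [Finset.sum_eq_zero, h ν (by omega)]
    intro q _
    rw [coeff_monomial, if_neg]
    intro hq
    apply hb
    rw [← hq]
    simp [idxmu_apply0, idxmu_apply1, q.1.isLt, q.2.isLt]
open MvPolynomial

lemma coeff_pderiv' (i : Fin 2) (ν : Fin 2 →₀ ℕ) (Q : MvPolynomial (Fin 2) ℝ) :
    coeff ν (pderiv i Q) = ((ν i : ℝ) + 1) * coeff (ν + Finsupp.single i 1) Q := by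
  induction Q using MvPolynomial.induction_on' with
  | add p q hp hq => rw [map_add, coeff_add, hp, hq, coeff_add]; ring
  | monomial μ a =>
    rw [pderiv_monomial, coeff_monomial, coeff_monomial]
    by_cases h : μ = ν + Finsupp.single i 1
    · subst h
      rw [if_pos, if_pos rfl]
      · have h1 : (ν + Finsupp.single i 1 : Fin 2 →₀ ℕ) i = ν i + 1 := by
          simp [Finsupp.add_apply, Finsupp.single_eq_same]
        rw [h1]; push_cast; ring
      · ext a
        by_cases ha : a = i
        · subst ha; simp [Finsupp.add_apply, Finsupp.single_eq_same]
        · simp [Finsupp.add_apply, Finsupp.single_apply, Ne.symm ha]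
    · rw [if_neg h]
      rcases Nat.eq_zero_or_pos (μ i) with hz | hz
      · rw [hz]; simp
      · rw [if_neg, mul_zero]
        intro hc
        apply h
        ext a
        have hca := DFunLike.congr_fun hc a
        by_cases ha : a = i
        · subst ha
          simp [Finsupp.tsub_apply, Finsupp.add_apply, Finsupp.single_eq_same] at hca ⊢
          omega
        · simp [Finsupp.tsub_apply, Finsupp.add_apply, Finsupp.single_apply,
            Ne.symm ha] at hca ⊢
          omega

lemma totalDegree_pderiv_le' (i : Fin 2) (Q : MvPolynomial (Fin 2) ℝ) :
    (pderiv i Q).totalDegree ≤ Q.totalDegree := by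
  rw [totalDegree]
  apply Finset.sup_le
  intro ν hν
  rw [mem_support_iff, coeff_pderiv'] at hν
  have h2 : coeff (ν + Finsupp.single i 1) Q ≠ 0 := right_ne_zero_of_mul hν
  have h3 := le_totalDegree (mem_support_iff.mpr h2)
  rw [finsupp_sum_eq] at h3 ⊢
  have h4 : (ν + Finsupp.single i 1 : Fin 2 →₀ ℕ) 0 + (ν + Finsupp.single i 1 : Fin 2 →₀ ℕ) 1
      = ν 0 + ν 1 + 1 := by
    fin_cases i <;> simp [Finsupp.add_apply, Finsupp.single_apply] <;> ring
  omega

lemma pderiv_comm' (i j : Fin 2) (Q : MvPolynomial (Fin 2) ℝ) :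
    pderiv i (pderiv j Q) = pderiv j (pderiv i Q) := by
  ext ν
  rw [coeff_pderiv', coeff_pderiv', coeff_pderiv', coeff_pderiv']
  rw [show ν + Finsupp.single j 1 + Finsupp.single i 1
      = ν + Finsupp.single i 1 + Finsupp.single j 1 from add_right_comm _ _ _]
  by_cases h : i = j
  · subst h; ring
  · rw [Finsupp.add_apply, Finsupp.add_apply, Finsupp.single_apply, Finsupp.single_apply,
      if_neg h, if_neg (fun hh => h hh.symm)]
    push_cast; ring

lemma evalx (y₀ x : ℝ) (Q : MvPolynomial (Fin 2) ℝ) :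
    Polynomial.eval x (MvPolynomial.aeval ![Polynomial.X, Polynomial.C y₀] Q) = eval ![x, y₀] Q := by
  induction Q using MvPolynomial.induction_on' with
  | add p q hp hq => rw [map_add, map_add, Polynomial.eval_add, hp, hq]
  | monomial μ a =>
    rw [aeval_monomial, eval_monomial]
    rw [Finsupp.prod_fintype _ _ (fun _ => pow_zero _), Finsupp.prod_fintype _ _ (fun _ => pow_zero _)]
    rw [Fin.prod_univ_two, Fin.prod_univ_two]
    simp

lemma evaly (x₀ y : ℝ) (Q : MvPolynomial (Fin 2) ℝ) :
    Polynomial.eval y (MvPolynomial.aeval ![Polynomial.C x₀, Polynomial.X] Q) = eval ![x₀, y] Q := by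
  induction Q using MvPolynomial.induction_on' with
  | add p q hp hq => rw [map_add, map_add, Polynomial.eval_add, hp, hq]
  | monomial μ a =>
    rw [aeval_monomial, eval_monomial]
    rw [Finsupp.prod_fintype _ _ (fun _ => pow_zero _), Finsupp.prod_fintype _ _ (fun _ => pow_zero _)]
    rw [Fin.prod_univ_two, Fin.prod_univ_two]
    simp

lemma degx (y₀ : ℝ) (Q : MvPolynomial (Fin 2) ℝ) :
    (MvPolynomial.aeval ![Polynomial.X, Polynomial.C y₀] Q).natDegree ≤ Q.totalDegree := by
  conv_lhs => rw [← support_sum_monomial_coeff Q]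
  rw [map_sum]
  apply Polynomial.natDegree_sum_le_of_forall_le
  intro ν hν
  rw [aeval_monomial, Finsupp.prod_fintype _ _ (fun _ => pow_zero _), Fin.prod_univ_two]
  have h1 : ν 0 ≤ Q.totalDegree := by
    have := le_totalDegree hν; rw [finsupp_sum_eq] at this; omega
  calc (algebraMap ℝ (Polynomial ℝ) (coeff ν Q) * (![Polynomial.X, Polynomial.C y₀] 0 ^ ν 0 *
        ![Polynomial.X, Polynomial.C y₀] 1 ^ ν 1)).natDegree
      ≤ (algebraMap ℝ (Polynomial ℝ) (coeff ν Q)).natDegree +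
        ((![Polynomial.X, Polynomial.C y₀] 0 ^ ν 0).natDegree +
         (![Polynomial.X, Polynomial.C y₀] 1 ^ ν 1).natDegree) := by
        refine le_trans (Polynomial.natDegree_mul_le) ?_
        gcongr
        exact Polynomial.natDegree_mul_le
    _ ≤ 0 + (ν 0 + 0) := by
        gcongr
        · simp
        · simp [Polynomial.natDegree_X_pow]
        · rw [show ![Polynomial.X, Polynomial.C y₀] 1 = Polynomial.C y₀ from rfl,
            ← Polynomial.C_pow, Polynomial.natDegree_C]
    _ ≤ Q.totalDegree := by omega

lemma degy (x₀ : ℝ) (Q : MvPolynomial (Fin 2) ℝ) :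
    (MvPolynomial.aeval ![Polynomial.C x₀, Polynomial.X] Q).natDegree ≤ Q.totalDegree := by
  conv_lhs => rw [← support_sum_monomial_coeff Q]
  rw [map_sum]
  apply Polynomial.natDegree_sum_le_of_forall_le
  intro ν hν
  rw [aeval_monomial, Finsupp.prod_fintype _ _ (fun _ => pow_zero _), Fin.prod_univ_two]
  have h1 : ν 1 ≤ Q.totalDegree := by
    have := le_totalDegree hν; rw [finsupp_sum_eq] at this; omega
  calc (algebraMap ℝ (Polynomial ℝ) (coeff ν Q) * (![Polynomial.C x₀, Polynomial.X] 0 ^ ν 0 *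
        ![Polynomial.C x₀, Polynomial.X] 1 ^ ν 1)).natDegree
      ≤ (algebraMap ℝ (Polynomial ℝ) (coeff ν Q)).natDegree +
        ((![Polynomial.C x₀, Polynomial.X] 0 ^ ν 0).natDegree +
         (![Polynomial.C x₀, Polynomial.X] 1 ^ ν 1).natDegree) := by
        refine le_trans (Polynomial.natDegree_mul_le) ?_
        gcongr
        exact Polynomial.natDegree_mul_le
    _ ≤ 0 + (0 + ν 1) := by
        gcongr
        · simp
        · rw [show ![Polynomial.C x₀, Polynomial.X] 0 = Polynomial.C x₀ from rfl,
            ← Polynomial.C_pow, Polynomial.natDegree_C]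
        · simp [Polynomial.natDegree_X_pow]
    _ ≤ Q.totalDegree := by omega

lemma grid_vanish (m : ℕ) (Q : MvPolynomial (Fin 2) ℝ) (hdeg : Q.totalDegree ≤ m)
    (t : Fin (m+1) → ℝ) (ht : Function.Injective t)
    (hv : ∀ i j, eval ![t i, t j] Q = 0) : Q = 0 := by
  have h1 : ∀ (j : Fin (m+1)) (x : ℝ), eval ![x, t j] Q = 0 := by
    intro j x
    have hq0 : MvPolynomial.aeval ![Polynomial.X, Polynomial.C (t j)] Q = 0 := by
      apply Polynomial.eq_zero_of_natDegree_lt_card_of_eval_eq_zero _ ht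
      · intro i; rw [evalx]; exact hv i j
      · calc _ ≤ Q.totalDegree := degx _ _
          _ < m + 1 := by omega
          _ = Fintype.card (Fin (m+1)) := by simp
    rw [← evalx, hq0, Polynomial.eval_zero]
  have h2 : ∀ x y : ℝ, eval ![x, y] Q = 0 := by
    intro x y
    have hq0 : MvPolynomial.aeval ![Polynomial.C x, Polynomial.X] Q = 0 := by
      apply Polynomial.eq_zero_of_natDegree_lt_card_of_eval_eq_zero _ ht
      · intro j; rw [evaly]; exact h1 j x
      · calc _ ≤ Q.totalDegree := degy _ _
          _ < m + 1 := by omega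
          _ = Fintype.card (Fin (m+1)) := by simp
    rw [← evaly, hq0, Polynomial.eval_zero]
  apply MvPolynomial.funext
  intro v
  rw [map_zero]
  have hveq : ![v 0, v 1] = v := by funext a; fin_cases a <;> rfl
  rw [← hveq]
  exact h2 _ _

lemma eval_monomial_pair (x y r : ℝ) (ν : Fin 2 →₀ ℕ) :
    eval ![x, y] (monomial ν r) = r * x ^ ν 0 * y ^ ν 1 := by
  rw [eval_monomial, Finsupp.prod_fintype _ _ (fun _ => pow_zero _), Fin.prod_univ_two]
  simp [mul_assoc]

lemma toPoly_totalDegree (n : ℕ) (c : Fin n × Fin n → ℝ) (m : ℕ) (hm : ∀ p : Fin n × Fin n,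
    (p.1 : ℕ) + (p.2 : ℕ) ≤ m) : (toPoly n c).totalDegree ≤ m := by
  refine le_trans (totalDegree_finset_sum _ _) ?_
  apply Finset.sup_le
  intro p _
  refine le_trans (totalDegree_monomial_le _ _) ?_
  rw [show ((idxmu p).sum fun x => id) = ((idxmu p).sum fun _ e => e) from rfl, finsupp_sum_eq,
    idxmu_apply0, idxmu_apply1]
  exact hm p

lemma idxmu_le {n : ℕ} (p : Fin n × Fin n) (a : Fin 2) : idxmu p a ≤ n := by
  fin_cases a
  · show idxmu p 0 ≤ n
    rw [idxmu_apply0]; omega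
  · show idxmu p 1 ≤ n
    rw [idxmu_apply1]; omega

lemma pd2_eval (i j : Fin 2) (n : ℕ) (c : Fin n × Fin n → ℝ) (v : Fin 2 → ℝ) :
    eval v (pderiv i (pderiv j (toPoly n c)))
      = ∑ p : Fin n × Fin n, c p * eval v (pderiv i (pderiv j (monomial (idxmu p) 1))) := by
  rw [toPoly, map_sum, map_sum, map_sum]
  congr 1
  funext p
  rw [show (monomial (idxmu p)) (c p) = c p • (monomial (idxmu p)) (1:ℝ) from by
    rw [smul_monomial, smul_eq_mul, mul_one]]
  rw [Derivation.map_smul, Derivation.map_smul, smul_eval]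

lemma pd2_eval_bound (i j : Fin 2) (n : ℕ) (p : Fin n × Fin n) (x y : ℝ)
    (hx : |x| ≤ 1) (hy : |y| ≤ 1) :
    |eval ![x, y] (pderiv i (pderiv j (monomial (idxmu p) (1:ℝ))))| ≤ (n:ℝ)^2 := by
  rw [pderiv_monomial, pderiv_monomial, eval_monomial_pair]
  have h1 : (idxmu p) j ≤ n := idxmu_le p j
  have h2 : ((idxmu p - Finsupp.single j 1 : Fin 2 →₀ ℕ)) i ≤ n := by
    refine le_trans ?_ (idxmu_le p i)
    rw [Finsupp.tsub_apply]; omega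
  rw [abs_mul, abs_mul]
  have hr : |(1:ℝ) * ((idxmu p) j : ℕ) * (((idxmu p - Finsupp.single j 1 : Fin 2 →₀ ℕ)) i : ℕ)|
      ≤ (n:ℝ) * (n:ℝ) := by
    rw [one_mul, abs_mul, Nat.abs_cast, Nat.abs_cast]
    exact mul_le_mul (by exact_mod_cast h1) (by exact_mod_cast h2) (by positivity) (by positivity)
  have e1 : |x ^ ((((idxmu p - Finsupp.single j 1 : Fin 2 →₀ ℕ) - Finsupp.single i 1 : Fin 2 →₀ ℕ)) 0)| ≤ 1 := by
    rw [abs_pow]; exact pow_le_one₀ (abs_nonneg x) hx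
  have e2 : |y ^ ((((idxmu p - Finsupp.single j 1 : Fin 2 →₀ ℕ) - Finsupp.single i 1 : Fin 2 →₀ ℕ)) 1)| ≤ 1 := by
    rw [abs_pow]; exact pow_le_one₀ (abs_nonneg y) hy
  calc |(1:ℝ) * ((idxmu p) j : ℕ) * (((idxmu p - Finsupp.single j 1 : Fin 2 →₀ ℕ)) i : ℕ)|
        * |x ^ ((((idxmu p - Finsupp.single j 1 : Fin 2 →₀ ℕ) - Finsupp.single i 1 : Fin 2 →₀ ℕ)) 0)|
        * |y ^ ((((idxmu p - Finsupp.single j 1 : Fin 2 →₀ ℕ) - Finsupp.single i 1 : Fin 2 →₀ ℕ)) 1)|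
      ≤ ((n:ℝ) * (n:ℝ)) * 1 * 1 := by gcongr <;> first | exact abs_nonneg _ | positivity
    _ = (n:ℝ)^2 := by ring

lemma finsupp_eq_of_apply {μ ν : Fin 2 →₀ ℕ} (h0 : μ 0 = ν 0) (h1 : μ 1 = ν 1) : μ = ν := by
  ext a; fin_cases a; exacts [h0, h1]

lemma c_eq_zero_of_pd2 (n : ℕ) (c : Fin n × Fin n → ℝ)
    (hlow : ∀ p : Fin n × Fin n, (p.1 : ℕ) + (p.2 : ℕ) ≤ 1 → c p = 0)
    (h00 : pderiv 0 (pderiv 0 (toPoly n c)) = 0)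
    (h01 : pderiv 0 (pderiv 1 (toPoly n c)) = 0)
    (h11 : pderiv 1 (pderiv 1 (toPoly n c)) = 0) :
    ∀ p, c p = 0 := by
  intro p
  rcases le_or_gt ((p.1 : ℕ) + (p.2 : ℕ)) 1 with h | h
  · exact hlow p h
  · rw [← coeff_toPoly n c p]
    rcases (show 2 ≤ (p.1 : ℕ) ∨ 2 ≤ (p.2 : ℕ) ∨ (1 ≤ (p.1 : ℕ) ∧ 1 ≤ (p.2 : ℕ)) by omega)
      with hc | hc | hc
    · set ν : Fin 2 →₀ ℕ := Finsupp.single 0 ((p.1 : ℕ) - 2) + Finsupp.single 1 (p.2 : ℕ) with hν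
      have hkey : ν + Finsupp.single 0 1 + Finsupp.single 0 1 = idxmu p := by
        apply finsupp_eq_of_apply <;>
          simp [hν, idxmu, Finsupp.add_apply, Finsupp.single_apply] <;> omega
      have e1 : coeff ν (pderiv 0 (pderiv 0 (toPoly n c))) = 0 := by rw [h00, coeff_zero]
      rw [coeff_pderiv', coeff_pderiv', hkey] at e1
      rcases mul_eq_zero.mp e1 with h' | e2
      · exfalso; have : (0:ℝ) ≤ (ν 0 : ℝ) := by positivity
        linarith
      · rcases mul_eq_zero.mp e2 with h' | h'
        · exfalso
          have : (0:ℝ) ≤ (((ν + Finsupp.single 0 1 : Fin 2 →₀ ℕ) 0 : ℕ) : ℝ) := by positivity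
          linarith
        · exact h'
    · set ν : Fin 2 →₀ ℕ := Finsupp.single 0 (p.1 : ℕ) + Finsupp.single 1 ((p.2 : ℕ) - 2) with hν
      have hkey : ν + Finsupp.single 1 1 + Finsupp.single 1 1 = idxmu p := by
        apply finsupp_eq_of_apply <;>
          simp [hν, idxmu, Finsupp.add_apply, Finsupp.single_apply] <;> omega
      have e1 : coeff ν (pderiv 1 (pderiv 1 (toPoly n c))) = 0 := by rw [h11, coeff_zero]
      rw [coeff_pderiv', coeff_pderiv', hkey] at e1
      rcases mul_eq_zero.mp e1 with h' | e2
      · exfalso; have : (0:ℝ) ≤ (ν 1 : ℝ) := by positivity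
        linarith
      · rcases mul_eq_zero.mp e2 with h' | h'
        · exfalso
          have : (0:ℝ) ≤ (((ν + Finsupp.single 1 1 : Fin 2 →₀ ℕ) 1 : ℕ) : ℝ) := by positivity
          linarith
        · exact h'
    · set ν : Fin 2 →₀ ℕ := Finsupp.single 0 ((p.1 : ℕ) - 1) + Finsupp.single 1 ((p.2 : ℕ) - 1)
        with hν
      have hkey : ν + Finsupp.single 0 1 + Finsupp.single 1 1 = idxmu p := by
        apply finsupp_eq_of_apply <;>
          simp [hν, idxmu, Finsupp.add_apply, Finsupp.single_apply] <;> omega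
      have e1 : coeff ν (pderiv 0 (pderiv 1 (toPoly n c))) = 0 := by rw [h01, coeff_zero]
      rw [coeff_pderiv', coeff_pderiv', hkey] at e1
      rcases mul_eq_zero.mp e1 with h' | e2
      · exfalso; have : (0:ℝ) ≤ (ν 0 : ℝ) := by positivity
        linarith
      · rcases mul_eq_zero.mp e2 with h' | h'
        · exfalso
          have : (0:ℝ) ≤ (((ν + Finsupp.single 0 1 : Fin 2 →₀ ℕ) 1 : ℕ) : ℝ) := by positivity
          linarith
        · exact h'

set_option maxHeartbeats 1000000 in
theorem statement16 (d : ℕ) (hd : 2 ≤ d) (K k : ℝ) (hK : 1 ≤ K) (hk : 0 < k) :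
    ∃ c₁ C₁ : ℝ, 0 < c₁ ∧
      ∀ P : MvPolynomial (Fin 2) ℝ, P.totalDegree ≤ d →
      (∀ μ : Fin 2 →₀ ℕ, μ 0 + μ 1 ≤ 1 → MvPolynomial.coeff μ P = 0) →
      CoeffBdd P K →
      (∃ μ : Fin 2 →₀ ℕ, k ≤ |MvPolynomial.coeff μ P|) →
      ∃ x₀ y₀ : ℝ, x₀ ^ 2 + y₀ ^ 2 ≤ 1 ∧
        ∃ (lam : ℝ) (v : Fin 2 → ℝ), v ≠ 0 ∧
          Matrix.mulVec
            !![pev (Pdx (Pdx P)) (x₀, y₀), pev (Pdy (Pdx P)) (x₀, y₀);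
               pev (Pdx (Pdy P)) (x₀, y₀), pev (Pdy (Pdy P)) (x₀, y₀)] v = lam • v ∧
          c₁ ≤ |lam| ∧ |lam| ≤ C₁ := by
  classical
  by_cases hKk : k ≤ K
  case neg =>
    refine ⟨1, 1, one_pos, fun P _ _ hbdd hex => absurd ?_ hKk⟩
    obtain ⟨μ, hμ⟩ := hex
    exact le_trans hμ (hbdd μ)
  set n : ℕ := d + 1 with hn
  set m : ℕ := 2 * d with hm
  set t : Fin (m+1) → ℝ := fun i => (i : ℝ) / (2 * m + 2) with htdef
  have htb : ∀ i : Fin (m+1), 0 ≤ t i ∧ t i ≤ 1/2 := by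
    intro i
    have hi : (i : ℝ) ≤ m := by exact_mod_cast Nat.lt_succ_iff.mp i.isLt
    have h2m : (0:ℝ) < 2 * m + 2 := by positivity
    constructor
    · positivity
    · rw [div_le_iff₀ h2m]; linarith
  have ht_inj : Function.Injective t := by
    intro i j hij
    have h2m : (2 * (m:ℝ) + 2) ≠ 0 := by positivity
    rw [htdef] at hij
    field_simp at hij
    exact Fin.ext (Nat.cast_injective hij)
  -- the three second-derivative evaluation functions
  set G : (Fin n × Fin n → ℝ) → ℝ := fun c =>
    ∑ ij : Fin (m+1) × Fin (m+1),
      (|MvPolynomial.eval ![t ij.1, t ij.2] (MvPolynomial.pderiv 0 (MvPolynomial.pderiv 0 (toPoly n c)))| +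
       |MvPolynomial.eval ![t ij.1, t ij.2] (MvPolynomial.pderiv 0 (MvPolynomial.pderiv 1 (toPoly n c)))| +
       |MvPolynomial.eval ![t ij.1, t ij.2] (MvPolynomial.pderiv 1 (MvPolynomial.pderiv 1 (toPoly n c)))|)
    with hG
  set T : Set (Fin n × Fin n → ℝ) := {c | (∀ p, |c p| ≤ K) ∧
      (∀ p : Fin n × Fin n, (p.1 : ℕ) + (p.2 : ℕ) ≤ 1 → c p = 0) ∧ (∃ p, k ≤ |c p|)} with hT
  have hA : IsClosed {c : Fin n × Fin n → ℝ | ∀ p, |c p| ≤ K} := by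
    rw [Set.setOf_forall]
    exact isClosed_iInter fun p => isClosed_le (continuous_apply p).abs continuous_const
  have hB : IsClosed {c : Fin n × Fin n → ℝ |
      ∀ p : Fin n × Fin n, (p.1 : ℕ) + (p.2 : ℕ) ≤ 1 → c p = 0} := by
    rw [Set.setOf_forall]
    refine isClosed_iInter fun p => ?_
    by_cases hcond : (p.1 : ℕ) + (p.2 : ℕ) ≤ 1
    · simp only [hcond, forall_true_left]
      exact isClosed_eq (continuous_apply p) continuous_const
    · simp only [hcond, IsEmpty.forall_iff, false_implies, Set.setOf_true]
      exact isClosed_univ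
  have hC : IsClosed {c : Fin n × Fin n → ℝ | ∃ p, k ≤ |c p|} := by
    rw [Set.setOf_exists]
    exact isClosed_iUnion_of_finite fun p => isClosed_le continuous_const (continuous_apply p).abs
  have hTclosed : IsClosed T := by
    rw [hT, Set.setOf_and, Set.setOf_and]
    exact hA.inter (hB.inter hC)
  have hTcomp : IsCompact T := by
    refine IsCompact.of_isClosed_subset (isCompact_univ_pi
      (fun _ : Fin n × Fin n => isCompact_Icc (a := (-K : ℝ)) (b := K))) hTclosed ?_
    intro c hc
    rw [Set.mem_univ_pi]
    intro p
    exact Set.mem_Icc.mpr (abs_le.mp (hc.1 p))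
  have hTne : T.Nonempty := by
    have hw2 : 2 < n := by omega
    have hw0 : 0 < n := by omega
    set w : Fin n × Fin n := ((⟨2, hw2⟩ : Fin n), (⟨0, hw0⟩ : Fin n)) with hw
    refine ⟨fun p => if p = w then k else 0, ?_, ?_, ?_⟩
    · intro p
      show |if p = w then k else 0| ≤ K
      by_cases hp : p = w
      · rw [if_pos hp, abs_of_pos hk]; exact hKk
      · rw [if_neg hp, abs_zero]; linarith
    · intro p hp
      show (if p = w then k else 0) = 0
      rw [if_neg]
      intro hcon
      rw [hcon, hw] at hp
      simp at hp
    · refine ⟨w, ?_⟩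
      show k ≤ |if w = w then k else 0|
      rw [if_pos rfl, abs_of_pos hk]
  have hc1 : ∀ (a b : Fin 2) (v : Fin 2 → ℝ), Continuous fun c : Fin n × Fin n → ℝ =>
      MvPolynomial.eval v (MvPolynomial.pderiv a (MvPolynomial.pderiv b (toPoly n c))) := by
    intro a b v
    have hrw : (fun c : Fin n × Fin n → ℝ =>
        MvPolynomial.eval v (MvPolynomial.pderiv a (MvPolynomial.pderiv b (toPoly n c))))
        = fun c => ∑ p : Fin n × Fin n, c p *
          MvPolynomial.eval v
            (MvPolynomial.pderiv a (MvPolynomial.pderiv b (MvPolynomial.monomial (idxmu p) 1))) :=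
      funext fun c => pd2_eval a b n c v
    rw [hrw]
    exact continuous_finset_sum _ fun p _ => (continuous_apply p).mul continuous_const
  have hGcont : Continuous G := by
    rw [hG]
    exact continuous_finset_sum _ fun ij _ =>
      (((hc1 0 0 _).abs.add (hc1 0 1 _).abs).add (hc1 1 1 _).abs)
  obtain ⟨c₀, hc₀T, hmin⟩ := hTcomp.exists_isMinOn hTne hGcont.continuousOn
  have hGnonneg : ∀ c, 0 ≤ G c := by
    intro c
    rw [hG]
    exact Finset.sum_nonneg fun ij _ => by positivity
  have hε : 0 < G c₀ := by
    rcases lt_or_ge 0 (G c₀) with h | h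
    · exact h
    exfalso
    have hz : G c₀ = 0 := le_antisymm h (hGnonneg c₀)
    rw [hG] at hz
    beta_reduce at hz
    have hall := (Finset.sum_eq_zero_iff_of_nonneg
      (s := (Finset.univ : Finset (Fin (m+1) × Fin (m+1)))) (fun ij _ => by positivity)).mp hz
    have hev : ∀ (a b : Fin 2), (a = 0 ∧ b = 0) ∨ (a = 0 ∧ b = 1) ∨ (a = 1 ∧ b = 1) →
        ∀ i j : Fin (m+1), MvPolynomial.eval ![t i, t j]
          (MvPolynomial.pderiv a (MvPolynomial.pderiv b (toPoly n c₀))) = 0 := by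
      intro a b hab i j
      have := hall (i, j) (Finset.mem_univ _)
      have h1 : |MvPolynomial.eval ![t i, t j] (MvPolynomial.pderiv 0 (MvPolynomial.pderiv 0 (toPoly n c₀)))| = 0 ∧
          |MvPolynomial.eval ![t i, t j] (MvPolynomial.pderiv 0 (MvPolynomial.pderiv 1 (toPoly n c₀)))| = 0 ∧
          |MvPolynomial.eval ![t i, t j] (MvPolynomial.pderiv 1 (MvPolynomial.pderiv 1 (toPoly n c₀)))| = 0 := by
        constructor
        · nlinarith [abs_nonneg (MvPolynomial.eval ![t i, t j] (MvPolynomial.pderiv 0 (MvPolynomial.pderiv 0 (toPoly n c₀)))),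
            abs_nonneg (MvPolynomial.eval ![t i, t j] (MvPolynomial.pderiv 0 (MvPolynomial.pderiv 1 (toPoly n c₀)))),
            abs_nonneg (MvPolynomial.eval ![t i, t j] (MvPolynomial.pderiv 1 (MvPolynomial.pderiv 1 (toPoly n c₀))))]
        constructor
        · nlinarith [abs_nonneg (MvPolynomial.eval ![t i, t j] (MvPolynomial.pderiv 0 (MvPolynomial.pderiv 0 (toPoly n c₀)))),
            abs_nonneg (MvPolynomial.eval ![t i, t j] (MvPolynomial.pderiv 0 (MvPolynomial.pderiv 1 (toPoly n c₀)))),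
            abs_nonneg (MvPolynomial.eval ![t i, t j] (MvPolynomial.pderiv 1 (MvPolynomial.pderiv 1 (toPoly n c₀))))]
        · nlinarith [abs_nonneg (MvPolynomial.eval ![t i, t j] (MvPolynomial.pderiv 0 (MvPolynomial.pderiv 0 (toPoly n c₀)))),
            abs_nonneg (MvPolynomial.eval ![t i, t j] (MvPolynomial.pderiv 0 (MvPolynomial.pderiv 1 (toPoly n c₀)))),
            abs_nonneg (MvPolynomial.eval ![t i, t j] (MvPolynomial.pderiv 1 (MvPolynomial.pderiv 1 (toPoly n c₀))))]
      rcases hab with ⟨ha, hb⟩ | ⟨ha, hb⟩ | ⟨ha, hb⟩ <;> subst ha <;> subst hb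
      · exact abs_eq_zero.mp h1.1
      · exact abs_eq_zero.mp h1.2.1
      · exact abs_eq_zero.mp h1.2.2
    have hdeg : ∀ (a b : Fin 2),
        (MvPolynomial.pderiv a (MvPolynomial.pderiv b (toPoly n c₀))).totalDegree ≤ m := by
      intro a b
      refine le_trans (totalDegree_pderiv_le' _ _) (le_trans (totalDegree_pderiv_le' _ _) ?_)
      apply toPoly_totalDegree
      intro p
      have := p.1.isLt
      have := p.2.isLt
      omega
    have hzero : ∀ (a b : Fin 2), (a = 0 ∧ b = 0) ∨ (a = 0 ∧ b = 1) ∨ (a = 1 ∧ b = 1) →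
        MvPolynomial.pderiv a (MvPolynomial.pderiv b (toPoly n c₀)) = 0 := by
      intro a b hab
      exact grid_vanish m _ (hdeg a b) t ht_inj (hev a b hab)
    have hc0 := c_eq_zero_of_pd2 n c₀ hc₀T.2.1
      (hzero 0 0 (by tauto)) (hzero 0 1 (by tauto)) (hzero 1 1 (by tauto))
    obtain ⟨p, hp⟩ := hc₀T.2.2
    rw [hc0 p, abs_zero] at hp
    linarith
  set Nc : ℝ := ((m+1 : ℕ) : ℝ)^2 with hNc
  have hNcpos : 0 < Nc := by positivity
  refine ⟨G c₀ / (3 * Nc), 3 * (K * (n:ℝ)^4), by positivity, ?_⟩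
  intro P hPdeg hPlow hPbdd hPex
  set cP : Fin n × Fin n → ℝ := fun p => MvPolynomial.coeff (idxmu p) P with hcP
  have htoP : toPoly n cP = P := by
    apply toPoly_eq
    intro ν hν
    apply MvPolynomial.coeff_eq_zero_of_totalDegree_lt
    have hsum : (∑ i ∈ ν.support, ν i) = ν 0 + ν 1 := by
      rw [show (∑ i ∈ ν.support, ν i) = ν.sum (fun _ e => e) from rfl, finsupp_sum_eq]
    rw [hsum]
    omega
  have hcPT : cP ∈ T := by
    rw [hT]
    refine ⟨fun p => hPbdd (idxmu p), ?_, ?_⟩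
    · intro p hp
      apply hPlow
      rw [idxmu_apply0, idxmu_apply1]
      exact hp
    · obtain ⟨μ, hμ⟩ := hPex
      have hμd : μ 0 + μ 1 ≤ d := by
        by_contra hcon
        rw [MvPolynomial.coeff_eq_zero_of_totalDegree_lt (by
          rw [show (∑ i ∈ μ.support, μ i) = μ.sum (fun _ e => e) from rfl, finsupp_sum_eq]
          omega)] at hμ
        rw [abs_zero] at hμ
        linarith
      refine ⟨((⟨μ 0, by omega⟩ : Fin n), (⟨μ 1, by omega⟩ : Fin n)), ?_⟩
      have hiμ : idxmu ((⟨μ 0, by omega⟩ : Fin n), (⟨μ 1, by omega⟩ : Fin n)) = μ :=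
        finsupp_eq_of_apply (by rw [idxmu_apply0]) (by rw [idxmu_apply1])
      show k ≤ |MvPolynomial.coeff (idxmu ((⟨μ 0, by omega⟩ : Fin n), (⟨μ 1, by omega⟩ : Fin n))) P|
      rw [hiμ]
      exact hμ
  have hmin' : G c₀ ≤ G cP := hmin hcPT
  have hex : ∃ ij : Fin (m+1) × Fin (m+1), G c₀ / Nc ≤
      |MvPolynomial.eval ![t ij.1, t ij.2] (MvPolynomial.pderiv 0 (MvPolynomial.pderiv 0 P))| +
      |MvPolynomial.eval ![t ij.1, t ij.2] (MvPolynomial.pderiv 0 (MvPolynomial.pderiv 1 P))| +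
      |MvPolynomial.eval ![t ij.1, t ij.2] (MvPolynomial.pderiv 1 (MvPolynomial.pderiv 1 P))| := by
    by_contra hcon
    push_neg at hcon
    have hGcP : G cP = ∑ ij : Fin (m+1) × Fin (m+1),
        (|MvPolynomial.eval ![t ij.1, t ij.2] (MvPolynomial.pderiv 0 (MvPolynomial.pderiv 0 P))| +
         |MvPolynomial.eval ![t ij.1, t ij.2] (MvPolynomial.pderiv 0 (MvPolynomial.pderiv 1 P))| +
         |MvPolynomial.eval ![t ij.1, t ij.2] (MvPolynomial.pderiv 1 (MvPolynomial.pderiv 1 P))|) := by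
      rw [hG]
      beta_reduce
      rw [htoP]
    have hlt : G cP < G c₀ := by
      rw [hGcP]
      calc ∑ ij : Fin (m+1) × Fin (m+1),
          (|MvPolynomial.eval ![t ij.1, t ij.2] (MvPolynomial.pderiv 0 (MvPolynomial.pderiv 0 P))| +
           |MvPolynomial.eval ![t ij.1, t ij.2] (MvPolynomial.pderiv 0 (MvPolynomial.pderiv 1 P))| +
           |MvPolynomial.eval ![t ij.1, t ij.2] (MvPolynomial.pderiv 1 (MvPolynomial.pderiv 1 P))|)
          < ∑ _ij : Fin (m+1) × Fin (m+1), G c₀ / Nc :=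
            Finset.sum_lt_sum_of_nonempty Finset.univ_nonempty (fun ij _ => hcon ij)
        _ = G c₀ := by
            rw [Finset.sum_const, Finset.card_univ, nsmul_eq_mul]
            rw [Fintype.card_prod, Fintype.card_fin]
            rw [hNc]
            push_cast
            field_simp
    linarith
  obtain ⟨ij, hij⟩ := hex
  have hx01 : 0 ≤ t ij.1 ∧ t ij.1 ≤ 1/2 := htb ij.1
  have hy01 : 0 ≤ t ij.2 ∧ t ij.2 ≤ 1/2 := htb ij.2
  refine ⟨t ij.1, t ij.2, by nlinarith [hx01.1, hx01.2, hy01.1, hy01.2], ?_⟩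
  obtain ⟨lam, v, hv0, hmul, ha, hb2, hc2, hup⟩ := eig2
    (MvPolynomial.eval ![t ij.1, t ij.2] (MvPolynomial.pderiv 0 (MvPolynomial.pderiv 0 P)))
    (MvPolynomial.eval ![t ij.1, t ij.2] (MvPolynomial.pderiv 0 (MvPolynomial.pderiv 1 P)))
    (MvPolynomial.eval ![t ij.1, t ij.2] (MvPolynomial.pderiv 1 (MvPolynomial.pderiv 1 P)))
  have hbd : ∀ (a' b' : Fin 2),
      |MvPolynomial.eval ![t ij.1, t ij.2] (MvPolynomial.pderiv a' (MvPolynomial.pderiv b' P))|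
        ≤ K * (n:ℝ)^4 := by
    intro a' b'
    rw [← htoP, pd2_eval]
    have habs : |t ij.1| ≤ 1 := by rw [abs_of_nonneg hx01.1]; linarith [hx01.2]
    have habs2 : |t ij.2| ≤ 1 := by rw [abs_of_nonneg hy01.1]; linarith [hy01.2]
    calc |∑ p : Fin n × Fin n, cP p * MvPolynomial.eval ![t ij.1, t ij.2]
          (MvPolynomial.pderiv a' (MvPolynomial.pderiv b' (MvPolynomial.monomial (idxmu p) 1)))|
        ≤ ∑ p : Fin n × Fin n, |cP p * MvPolynomial.eval ![t ij.1, t ij.2]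
          (MvPolynomial.pderiv a' (MvPolynomial.pderiv b' (MvPolynomial.monomial (idxmu p) 1)))| :=
          Finset.abs_sum_le_sum_abs _ _
      _ ≤ ∑ _p : Fin n × Fin n, K * (n:ℝ)^2 := by
          refine Finset.sum_le_sum fun p _ => ?_
          rw [abs_mul]
          exact mul_le_mul (hPbdd (idxmu p)) (pd2_eval_bound a' b' n p _ _ habs habs2)
            (abs_nonneg _) (by linarith)
      _ = K * (n:ℝ)^4 := by
          rw [Finset.sum_const, Finset.card_univ, nsmul_eq_mul]
          rw [Fintype.card_prod, Fintype.card_fin]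
          push_cast
          ring
  refine ⟨lam, v, hv0, ?_, ?_, ?_⟩
  · have h2 : pev (Pdy (Pdx P)) (t ij.1, t ij.2)
        = MvPolynomial.eval ![t ij.1, t ij.2] (MvPolynomial.pderiv 0 (MvPolynomial.pderiv 1 P)) := by
      show MvPolynomial.eval ![t ij.1, t ij.2] (MvPolynomial.pderiv 1 (MvPolynomial.pderiv 0 P)) = _
      rw [pderiv_comm']
    have hmat : !![pev (Pdx (Pdx P)) (t ij.1, t ij.2), pev (Pdy (Pdx P)) (t ij.1, t ij.2);
               pev (Pdx (Pdy P)) (t ij.1, t ij.2), pev (Pdy (Pdy P)) (t ij.1, t ij.2)]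
        = !![MvPolynomial.eval ![t ij.1, t ij.2] (MvPolynomial.pderiv 0 (MvPolynomial.pderiv 0 P)),
             MvPolynomial.eval ![t ij.1, t ij.2] (MvPolynomial.pderiv 0 (MvPolynomial.pderiv 1 P));
             MvPolynomial.eval ![t ij.1, t ij.2] (MvPolynomial.pderiv 0 (MvPolynomial.pderiv 1 P)),
             MvPolynomial.eval ![t ij.1, t ij.2] (MvPolynomial.pderiv 1 (MvPolynomial.pderiv 1 P))] := by
      rw [h2]
      rfl
    rw [hmat]
    exact hmul
  · rw [div_le_iff₀ (by positivity)] at hij ⊢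
    nlinarith [ha, hb2, hc2, abs_nonneg lam, hNcpos]
  · linarith [hbd 0 0, hbd 0 1, hbd 1 1]

end
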